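/- If S = ⟨g₁, …, g_{n−k}⟩ is generated by n−k independent, pairwise commuting elements of the n-qubit Pauli group with −I ∉ S, then the simultaneous +1-eigenspace V_S = {|ψ⟩ : g|ψ⟩ = |ψ⟩ for all g ∈ S} of S is a subspace of (ℂ²)^⊗n of dimension 2^k. -/

import Mathlib

open Matrix

noncomputable def pauliMat : Fin 4 → Matrix (Fin 2) (Fin 2) ℂ :=
  ![1, !![0, 1; 1, 0], !![0, -Complex.I; Complex.I, 0], !![1, 0; 0, -1]]

noncomputable def pauliString {n : ℕ} (P : Fin n → Fin 4) :
    Matrix (Fin n → Fin 2) (Fin n → Fin 2) ℂ :=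
  fun x y => ∏ i, pauliMat (P i) (x i) (y i)

def PauliGroup (n : ℕ) : Set (Matrix (Fin n → Fin 2) (Fin n → Fin 2) ℂ) :=
  {g | ∃ c : ℂ, c ∈ ({1, -1, Complex.I, -Complex.I} : Set ℂ) ∧
    ∃ P : Fin n → Fin 4, g = c • pauliString P}

/-! ### Auxiliary lemmas -/

def pmul : Fin 4 → Fin 4 → Fin 4 :=
  ![![0,1,2,3], ![1,0,3,2], ![2,3,0,1], ![3,2,1,0]]

noncomputable def pphase : Fin 4 → Fin 4 → ℂ :=
  ![![1,1,1,1], ![1,1,Complex.I,-Complex.I], ![1,-Complex.I,1,Complex.I],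
    ![1,Complex.I,-Complex.I,1]]

lemma pauliMat_mul (a b : Fin 4) :
    pauliMat a * pauliMat b = pphase a b • pauliMat (pmul a b) := by
  fin_cases a <;> fin_cases b <;>
    · ext i j
      fin_cases i <;> fin_cases j <;>
        simp [pauliMat, pmul, pphase, Matrix.mul_apply, Fin.sum_univ_two,
          Matrix.one_apply, Complex.I_mul_I, Matrix.vecHead, Matrix.vecTail]

lemma pphase_pow4 (a b : Fin 4) : (pphase a b) ^ 4 = 1 := by
  fin_cases a <;> fin_cases b <;> simp [pphase, Matrix.vecHead, Matrix.vecTail] <;>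
    norm_num [pow_succ, Complex.I_mul_I]

lemma mem4_iff (c : ℂ) : c ∈ ({1, -1, Complex.I, -Complex.I} : Set ℂ) ↔ c ^ 4 = 1 := by
  constructor
  · rintro (rfl | rfl | rfl | rfl) <;> norm_num [pow_succ, Complex.I_mul_I]
  · intro h
    simp only [Set.mem_insert_iff, Set.mem_singleton_iff]
    have h1 : (c ^ 2 - 1) * (c ^ 2 + 1) = 0 := by linear_combination h
    rcases mul_eq_zero.1 h1 with h2 | h2
    · have h3 : (c - 1) * (c + 1) = 0 := by linear_combination h2
      rcases mul_eq_zero.1 h3 with h4 | h4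
      · left; linear_combination h4
      · right; left; linear_combination h4
    · have h3 : (c - Complex.I) * (c + Complex.I) = 0 := by
        linear_combination h2 - Complex.I_mul_I
      rcases mul_eq_zero.1 h3 with h4 | h4
      · right; right; left; linear_combination h4
      · right; right; right; linear_combination h4

lemma pauliString_mul {n : ℕ} (P Q : Fin n → Fin 4) :
    pauliString P * pauliString Q =
      (∏ i, pphase (P i) (Q i)) • pauliString (fun i => pmul (P i) (Q i)) := by
  ext x y
  simp only [Matrix.mul_apply, pauliString, Matrix.smul_apply, smul_eq_mul]
  have h1 : ∀ z : Fin n → Fin 2,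
      (∏ i, pauliMat (P i) (x i) (z i)) * ∏ i, pauliMat (Q i) (z i) (y i)
        = ∏ i, (pauliMat (P i) (x i) (z i) * pauliMat (Q i) (z i) (y i)) := by
    intro z; rw [← Finset.prod_mul_distrib]
  simp_rw [h1]
  rw [← Fintype.prod_sum (fun (i : Fin n) (t : Fin 2) =>
    pauliMat (P i) (x i) t * pauliMat (Q i) t (y i))]
  have h2 : ∀ i : Fin n, (∑ t : Fin 2, pauliMat (P i) (x i) t * pauliMat (Q i) t (y i))
      = pphase (P i) (Q i) * pauliMat (pmul (P i) (Q i)) (x i) (y i) := by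
    intro i
    have := congrFun (congrFun (pauliMat_mul (P i) (Q i)) (x i)) (y i)
    simpa [Matrix.mul_apply] using this
  simp_rw [h2]
  rw [Finset.prod_mul_distrib]

lemma pauliString_zero {n : ℕ} : pauliString (fun _ : Fin n => (0 : Fin 4)) = 1 := by
  ext x y
  simp only [pauliString]
  show (∏ i, (1 : Matrix (Fin 2) (Fin 2) ℂ) (x i) (y i)) = (1 : Matrix _ _ ℂ) x y
  simp_rw [Matrix.one_apply]
  rw [Finset.prod_boole]
  simp [funext_iff]

lemma one_mem_pauli (n : ℕ) : (1 : Matrix (Fin n → Fin 2) (Fin n → Fin 2) ℂ) ∈ PauliGroup n :=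
  ⟨1, by simp, fun _ => 0, by rw [pauliString_zero, one_smul]⟩

lemma mul_mem_pauli {n : ℕ} {A B : Matrix (Fin n → Fin 2) (Fin n → Fin 2) ℂ}
    (hA : A ∈ PauliGroup n) (hB : B ∈ PauliGroup n) : A * B ∈ PauliGroup n := by
  obtain ⟨c, hc, P, rfl⟩ := hA
  obtain ⟨d, hd, Q, rfl⟩ := hB
  refine ⟨c * d * ∏ i, pphase (P i) (Q i), ?_, fun i => pmul (P i) (Q i), ?_⟩
  · rw [mem4_iff] at hc hd ⊢
    rw [mul_pow, mul_pow, hc, hd, ← Finset.prod_pow]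
    simp [pphase_pow4]
  · rw [Matrix.smul_mul, Matrix.mul_smul, pauliString_mul, smul_smul, smul_smul, mul_assoc]

lemma trace_pauliString {n : ℕ} (P : Fin n → Fin 4) :
    (pauliString P).trace = ∏ i, ∑ t : Fin 2, pauliMat (P i) t t := by
  rw [Fintype.prod_sum (fun (i : Fin n) (t : Fin 2) => pauliMat (P i) t t)]
  simp [Matrix.trace, Matrix.diag, pauliString]

lemma pauli_trace_eq_zero {n : ℕ} {A : Matrix (Fin n → Fin 2) (Fin n → Fin 2) ℂ}
    (hA : A ∈ PauliGroup n) (hsq : A * A = 1) (h1 : A ≠ 1) (h2 : A ≠ -1) :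
    A.trace = 0 := by
  obtain ⟨c, hc, P, rfl⟩ := hA
  by_cases hP0 : ∀ i, P i = 0
  · exfalso
    have hP : P = fun _ => 0 := funext hP0
    rw [hP, pauliString_zero] at hsq h1 h2
    have hc2 : c * c = 1 := by
      rw [Matrix.smul_mul, Matrix.mul_smul, mul_one, smul_smul] at hsq
      have := congrFun (congrFun hsq (fun _ => 0)) (fun _ => 0)
      simpa [Matrix.one_apply] using this
    have h3 : (c - 1) * (c + 1) = 0 := by linear_combination hc2
    rcases mul_eq_zero.1 h3 with h4 | h4
    · have : c = 1 := by linear_combination h4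
      subst this; exact h1 (one_smul _ _)
    · have : c = -1 := by linear_combination h4
      subst this; exact h2 (by simp)
  · push_neg at hP0
    obtain ⟨i0, hi0⟩ := hP0
    obtain ⟨v, hv⟩ : ∃ v, P i0 = v := ⟨_, rfl⟩
    have hz : (∑ t : Fin 2, pauliMat (P i0) t t) = 0 := by
      rw [hv] at hi0 ⊢
      fin_cases v <;>
        simp_all [pauliMat, Fin.sum_univ_two, Matrix.vecHead, Matrix.vecTail]
    rw [Matrix.trace_smul, trace_pauliString,
      Finset.prod_eq_zero (Finset.mem_univ i0) hz, smul_zero]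

section generic
variable {ι R : Type*} [DecidableEq ι] [Ring R]

omit [DecidableEq ι] in
lemma comm1 {f : ι → R} (hc : ∀ a b, f a * f b = f b * f a) (a b : ι) :
    Commute (1 + f a) (1 + f b) := by
  have h : Commute (f a) (f b) := hc a b
  exact Commute.add_left (Commute.one_left _)
    (Commute.add_right (Commute.one_right _) h)

lemma noncommProd_sq {f : ι → R} (hc : ∀ a b, f a * f b = f b * f a)
    (hsq : ∀ i, f i * f i = 1) (s : Finset ι) :
    s.noncommProd f (fun a _ b _ _ => hc a b) * s.noncommProd f (fun a _ b _ _ => hc a b) = 1 := by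
  induction s using Finset.induction_on with
  | empty => exact mul_one (1:R)
  | @insert a s ha ih =>
    erw [Finset.noncommProd_insert_of_notMem _ _ _ _ ha]
    set p := s.noncommProd f (fun a _ b _ _ => hc a b) with hp
    have hcomm : Commute (f a) p :=
      Finset.noncommProd_commute _ _ _ _ (fun b _ => hc a b)
    calc f a * p * (f a * p)
        = f a * (p * f a) * p := by simp [mul_assoc]
      _ = f a * (f a * p) * p := by rw [← hcomm.eq]
      _ = (f a * f a) * (p * p) := by simp [mul_assoc]
      _ = 1 := by rw [hsq, ih, mul_one]

lemma noncommProd_expand {f : ι → R} (hc : ∀ a b, f a * f b = f b * f a) (s : Finset ι) :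
    s.noncommProd (fun i => 1 + f i) (fun a _ b _ _ => comm1 hc a b) =
      ∑ F ∈ s.powerset, F.noncommProd f (fun a _ b _ _ => hc a b) := by
  induction s using Finset.induction_on with
  | empty => simp; rfl
  | @insert a s ha ih =>
    erw [Finset.noncommProd_insert_of_notMem _ _ _ _ ha, ih, Finset.powerset_insert,
      Finset.sum_union, Finset.sum_image]
    · rw [add_mul, one_mul, Finset.mul_sum]
      congr 1
      refine Finset.sum_congr rfl fun F hF => ?_
      rw [Finset.mem_powerset] at hF
      have haF : a ∉ F := fun h => ha (hF h)
      erw [Finset.noncommProd_insert_of_notMem _ _ _ _ haF]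
    · intro x hx y hy hxy
      rw [Finset.mem_coe, Finset.mem_powerset] at hx hy
      apply_fun (·.erase a) at hxy
      rwa [Finset.erase_insert (fun h => ha (hx h)),
        Finset.erase_insert (fun h => ha (hy h))] at hxy
    · rw [Finset.disjoint_left]
      rintro F hF hF2
      obtain ⟨G, hG, rfl⟩ := Finset.mem_image.1 hF2
      exact ha (Finset.mem_powerset.1 hF (Finset.mem_insert_self a G))

lemma mul_noncommProd_fix {f : ι → R} (hc : ∀ a b, f a * f b = f b * f a)
    (hsq : ∀ i, f i * f i = 1) (s : Finset ι) {j : ι} (hj : j ∈ s) :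
    f j * s.noncommProd (fun i => 1 + f i) (fun a _ b _ _ => comm1 hc a b) =
      s.noncommProd (fun i => 1 + f i) (fun a _ b _ _ => comm1 hc a b) := by
  induction s using Finset.induction_on with
  | empty => simp at hj
  | @insert a s ha ih =>
    erw [Finset.noncommProd_insert_of_notMem _ _ _ _ ha]
    rcases Finset.mem_insert.1 hj with rfl | hj
    · rw [← mul_assoc, mul_add, mul_one, hsq, add_comm]
    · have hcomm : Commute (f j) (1 + f a) :=
        (Commute.one_right _).add_right (hc j a)
      rw [← mul_assoc, hcomm.eq, mul_assoc, ih hj]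
end generic

lemma toLin'_noncommProd_one_add {n m : ℕ} {g : Fin m → Matrix (Fin n → Fin 2) (Fin n → Fin 2) ℂ}
    (hc : ∀ a b, g a * g b = g b * g a) (s : Finset (Fin m))
    (x : (Fin n → Fin 2) → ℂ) (hx : ∀ i, Matrix.toLin' (g i) x = x) :
    Matrix.toLin' (s.noncommProd (fun i => 1 + g i) (fun a _ b _ _ => comm1 hc a b)) x
      = ((2:ℂ)^s.card) • x := by
  induction s using Finset.induction_on with
  | empty => simp [Matrix.toLin'_one]; exact Matrix.one_mulVec x
  | @insert a s ha ih =>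
    have h1a : Matrix.toLin' (1 + g a) x = (2:ℂ) • x := by
      rw [map_add, Matrix.toLin'_one]
      simp only [LinearMap.add_apply, LinearMap.id_apply, hx a, two_smul]
    erw [Finset.noncommProd_insert_of_notMem _ _ _ _ ha, Matrix.toLin'_mul,
      LinearMap.comp_apply, ih, _root_.map_smul, h1a, smul_smul,
      Finset.card_insert_of_notMem ha, pow_succ]

lemma noncommProd_mem_pauli {n m : ℕ} {g : Fin m → Matrix (Fin n → Fin 2) (Fin n → Fin 2) ℂ}
    (hP : ∀ i, g i ∈ PauliGroup n) (hc : ∀ a b, g a * g b = g b * g a) (F : Finset (Fin m)) :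
    F.noncommProd g (fun a _ b _ _ => hc a b) ∈ PauliGroup n := by
  induction F using Finset.induction_on with
  | empty => exact one_mem_pauli n
  | @insert a s ha ih =>
    erw [Finset.noncommProd_insert_of_notMem _ _ _ _ ha]
    exact mul_mem_pauli (hP a) ih

/-- If `S` is generated by `n-k` independent, pairwise commuting elements of the
n-qubit Pauli group with `-I ∉ S`, then the simultaneous `+1`-eigenspace has
dimension `2^k`. -/
theorem stabilizer_codespace_dim (n k : ℕ) (hk : k ≤ n)
    (g : Fin (n - k) → Matrix (Fin n → Fin 2) (Fin n → Fin 2) ℂ)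
    (hP : ∀ i, g i ∈ PauliGroup n)
    (hsq : ∀ i, g i * g i = 1)
    (hcomm : ∀ i j, g i * g j = g j * g i)
    (hindep : ∀ F : Finset (Fin (n - k)),
      F.noncommProd g (fun a _ b _ _ => hcomm a b) = 1 → F = ∅)
    (hnoNegI : ∀ F : Finset (Fin (n - k)),
      F.noncommProd g (fun a _ b _ _ => hcomm a b) ≠ -1) :
    Module.finrank ℂ
      ↥(⨅ i, Module.End.eigenspace (Matrix.toLin' (g i)) 1) = 2 ^ k := by
  classical
  have hmk : (n - k) + k = n := Nat.sub_add_cancel hk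
  set p := ⨅ i, Module.End.eigenspace (Matrix.toLin' (g i)) 1 with hpdef
  set Pi0 := (Finset.univ : Finset (Fin (n - k))).noncommProd (fun i => 1 + g i)
      (fun a _ b _ _ => comm1 hcomm a b) with hPi0
  set PM := ((2:ℂ)^(n - k))⁻¹ • Pi0 with hPM
  have h2m : (2:ℂ)^(n - k) ≠ 0 := pow_ne_zero _ two_ne_zero
  have hproj : LinearMap.IsProj p (Matrix.toLin' PM) := by
    constructor
    · intro x
      rw [hpdef, Submodule.mem_iInf]
      intro i
      rw [Module.End.mem_eigenspace_iff, one_smul]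
      have hfix : g i * PM = PM := by
        rw [hPM, Matrix.mul_smul, hPi0,
          mul_noncommProd_fix hcomm hsq _ (Finset.mem_univ i)]
      calc Matrix.toLin' (g i) (Matrix.toLin' PM x)
          = Matrix.toLin' (g i * PM) x := by rw [Matrix.toLin'_mul]; rfl
        _ = Matrix.toLin' PM x := by rw [hfix]
    · intro x hx
      have hx' : ∀ i, Matrix.toLin' (g i) x = x := by
        intro i
        have hxi : x ∈ Module.End.eigenspace (Matrix.toLin' (g i)) 1 :=
          (Submodule.mem_iInf _).1 hx i
        rw [Module.End.mem_eigenspace_iff] at hxi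
        simpa using hxi
      have haux := toLin'_noncommProd_one_add hcomm Finset.univ x hx'
      rw [Finset.card_univ, Fintype.card_fin, ← hPi0] at haux
      rw [hPM, _root_.map_smul, LinearMap.smul_apply, haux, smul_smul,
        inv_mul_cancel₀ h2m, one_smul]
  -- trace computation
  have htrace : Matrix.trace PM = (2:ℂ)^k := by
    rw [hPM, Matrix.trace_smul, hPi0, noncommProd_expand hcomm, Matrix.trace_sum]
    have hzero : ∀ F ∈ (Finset.univ : Finset (Fin (n - k))).powerset, F ≠ ∅ →
        (F.noncommProd g (fun a _ b _ _ => hcomm a b)).trace = 0 := by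
      intro F _ hF
      exact pauli_trace_eq_zero (noncommProd_mem_pauli hP hcomm F)
        (noncommProd_sq hcomm hsq F) (fun h => hF (hindep F h)) (hnoNegI F)
    rw [Finset.sum_eq_single_of_mem ∅ (Finset.mem_powerset.2 (Finset.empty_subset _))
      (fun F hF hne => hzero F hF hne)]
    show ((2:ℂ) ^ (n - k))⁻¹ • (1 : Matrix (Fin n → Fin 2) (Fin n → Fin 2) ℂ).trace = (2:ℂ) ^ k
    rw [Matrix.trace_one]
    have hcard : (Fintype.card (Fin n → Fin 2) : ℂ) = 2 ^ n := by
      rw [Fintype.card_fun]; push_cast; simp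
    have hsplit : (2:ℂ)^n = 2^(n-k) * 2^k := by rw [← pow_add, hmk]
    rw [hcard, hsplit, smul_eq_mul, ← mul_assoc, inv_mul_cancel₀ h2m, one_mul]
  have hfin : (Module.finrank ℂ p : ℂ) = (2:ℂ)^k := by
    rw [← hproj.trace]
    rw [LinearMap.trace_eq_matrix_trace ℂ (Pi.basisFun ℂ (Fin n → Fin 2)),
      LinearMap.toMatrix_eq_toMatrix', LinearMap.toMatrix'_toLin']
    exact htrace
  have hcast : ((Module.finrank ℂ p : ℕ) : ℂ) = ((2^k : ℕ) : ℂ) := by push_cast; exact hfin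
  exact_mod_cast hcast
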